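/- The two conics C₁ = {[x:y:z] ∈ ℂℙ² : x² + y² + x·y − y·z = 0} and C₂ = {[x:y:z] ∈ ℂℙ² : x² + y² − x·y − y·z = 0} have exactly two common points: C₁ ∩ C₂ = {[0:0:1], [0:1:1]}. -/
import Mathlib


open MvPolynomial Projectivization

/-- The two conics `C₁ = {x² + y² + x·y − y·z = 0}` and `C₂ = {x² + y² − x·y − y·z = 0}`
in `ℂℙ²` have exactly two common points: `[0:0:1]` and `[0:1:1]`. -/
theorem stmt_10 :
    {P : Projectivization ℂ (Fin 3 → ℂ) |
        eval P.rep (X 0 ^ 2 + X 1 ^ 2 + X 0 * X 1 - X 1 * X 2 : MvPolynomial (Fin 3) ℂ) = 0} ∩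
    {P : Projectivization ℂ (Fin 3 → ℂ) |
        eval P.rep (X 0 ^ 2 + X 1 ^ 2 - X 0 * X 1 - X 1 * X 2 : MvPolynomial (Fin 3) ℂ) = 0} =
      {Projectivization.mk ℂ ![0, 0, 1] (fun h => by simpa using congrFun h 2),
       Projectivization.mk ℂ ![0, 1, 1] (fun h => by simpa using congrFun h 1)} := by
  ext P
  have hv := P.rep_nonzero
  simp only [Set.mem_inter_iff, Set.mem_setOf_eq, Set.mem_insert_iff, Set.mem_singleton_iff,
    map_add, map_sub, map_mul, map_pow, eval_X]
  constructor
  · rintro ⟨h1, h2⟩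
    have hxy : P.rep 0 * P.rep 1 = 0 := by linear_combination (h1 - h2) / 2
    have hx0 : P.rep 0 = 0 := by
      rcases mul_eq_zero.mp hxy with h | h
      · exact h
      · have : P.rep 0 ^ 2 = 0 := by linear_combination h1 - (P.rep 1 + P.rep 0 - P.rep 2) * h
        exact pow_eq_zero_iff two_ne_zero |>.mp this
    have hy : P.rep 1 * (P.rep 1 - P.rep 2) = 0 := by
      linear_combination h1 - (P.rep 0 + P.rep 1) * hx0
    rcases mul_eq_zero.mp hy with hy0 | hyz
    · -- P = [0:0:1]
      left
      have hz : P.rep 2 ≠ 0 := by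
        intro hz
        apply hv
        funext i
        fin_cases i <;> simpa [hx0, hy0, hz]
      rw [← P.mk_rep, Projectivization.mk_eq_mk_iff]
      refine ⟨Units.mk0 (P.rep 2) hz, ?_⟩
      funext i
      fin_cases i <;> simp [hx0, hy0, Units.smul_def]
    · -- y = z
      have hyz' : P.rep 1 = P.rep 2 := sub_eq_zero.mp hyz
      by_cases hy0 : P.rep 1 = 0
      · left
        have hz : P.rep 2 ≠ 0 := by
          intro hz
          apply hv
          funext i
          fin_cases i <;> simpa [hx0, hy0, hz]
        rw [← P.mk_rep, Projectivization.mk_eq_mk_iff]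
        refine ⟨Units.mk0 (P.rep 2) hz, ?_⟩
        funext i
        fin_cases i <;> simp [hx0, hy0, Units.smul_def]
      · right
        rw [← P.mk_rep, Projectivization.mk_eq_mk_iff]
        refine ⟨Units.mk0 (P.rep 1) hy0, ?_⟩
        funext i
        fin_cases i <;> simp [hx0, ← hyz', Units.smul_def]
  · rintro (h | h)
    · have hmk : Projectivization.mk ℂ P.rep hv =
          Projectivization.mk ℂ ![0, 0, 1] (fun h => by simpa using congrFun h 2) := by
        rw [P.mk_rep, h]
      obtain ⟨a, ha⟩ := (Projectivization.mk_eq_mk_iff ℂ _ _ _ _).mp hmk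
      have h0 : P.rep 0 = 0 := by rw [← ha]; simp [Units.smul_def]
      have h1 : P.rep 1 = 0 := by rw [← ha]; simp [Units.smul_def]
      constructor <;> · rw [h0, h1]; ring
    · have hmk : Projectivization.mk ℂ P.rep hv =
          Projectivization.mk ℂ ![0, 1, 1] (fun h => by simpa using congrFun h 1) := by
        rw [P.mk_rep, h]
      obtain ⟨a, ha⟩ := (Projectivization.mk_eq_mk_iff ℂ _ _ _ _).mp hmk
      have h0 : P.rep 0 = 0 := by rw [← ha]; simp [Units.smul_def]
      have h1 : P.rep 1 = (a : ℂ) := by rw [← ha]; simp [Units.smul_def]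
      have h2 : P.rep 2 = (a : ℂ) := by rw [← ha]; simp [Units.smul_def]
      constructor <;> · rw [h0, h1, h2]; ring
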